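/- For all real numbers x > 0 and y ∈ ℝ, the function β(x,y) = ∫_{-π/2}^{π/2} (cos t)^{x-1} e^{yt} dt satisfies β(x+2, y) = (x(x+1)/((x+1)² + y²)) · β(x,y). -/

import Mathlib

open MeasureTheory

/-- `β(x,y) = ∫_{-π/2}^{π/2} (cos t)^{x-1} e^{yt} dt`. -/
noncomputable def beta (x y : ℝ) : ℝ :=
  ∫ t in (-(Real.pi / 2))..(Real.pi / 2), (Real.cos t) ^ (x - 1) * Real.exp (y * t)

lemma cosRpowIntegrableHalf {p : ℝ} (hp : -1 < p) (g : ℝ → ℝ) (hg : Continuous g) :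
    IntervalIntegrable (fun t => Real.cos t ^ p * g t) volume 0 (Real.pi / 2) := by
  have hpi := Real.pi_pos
  obtain ⟨C, hC⟩ := (isCompact_Icc (a := (0:ℝ)) (b := Real.pi/2)).exists_bound_of_continuousOn
    hg.continuousOn
  have hC0 : 0 ≤ C := le_trans (norm_nonneg _) (hC 0 ⟨le_refl _, by positivity⟩)
  have hmeas : AEStronglyMeasurable (fun t => Real.cos t ^ p * g t)
      (volume.restrict (Set.uIoc 0 (Real.pi/2))) :=
    ((Real.measurable_cos.pow_const p).mul hg.measurable).aestronglyMeasurable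
  have hIoc : Set.uIoc (0:ℝ) (Real.pi/2) = Set.Ioc 0 (Real.pi/2) := Set.uIoc_of_le (by positivity)
  rcases le_or_gt 0 p with hp0 | hp0
  · refine (intervalIntegrable_const (c := C)).mono_fun hmeas ?_
    rw [hIoc]
    refine (ae_restrict_iff' measurableSet_Ioc).2 (Filter.Eventually.of_forall fun t ht => ?_)
    have hcn : 0 ≤ Real.cos t :=
      Real.cos_nonneg_of_mem_Icc ⟨by linarith [ht.1], ht.2⟩
    have h1 : Real.cos t ^ p ≤ 1 := Real.rpow_le_one hcn (Real.cos_le_one t) hp0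
    have h2 : ‖g t‖ ≤ C := hC t ⟨ht.1.le, ht.2⟩
    have h3 : 0 ≤ Real.cos t ^ p := Real.rpow_nonneg hcn p
    show ‖Real.cos t ^ p * g t‖ ≤ ‖C‖
    calc ‖Real.cos t ^ p * g t‖ = Real.cos t ^ p * ‖g t‖ := by
          rw [norm_mul, Real.norm_of_nonneg h3]
      _ ≤ 1 * C := mul_le_mul h1 h2 (norm_nonneg _) one_pos.le
      _ ≤ ‖C‖ := by rw [one_mul, Real.norm_of_nonneg hC0]
  · -- p < 0 : compare with `(2/π)^p * C * (π/2 - t)^p`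
    have hmaj : IntervalIntegrable (fun t => (2/Real.pi)^p * C * (Real.pi/2 - t) ^ p)
        volume 0 (Real.pi/2) := by
      have h := (intervalIntegral.intervalIntegrable_rpow' (a := Real.pi/2) (b := 0) hp).comp_sub_left (Real.pi/2)
      simp only [sub_self, sub_zero] at h
      exact h.const_mul _
    refine hmaj.mono_fun hmeas ?_
    rw [hIoc]
    refine (ae_restrict_iff' measurableSet_Ioc).2 (Filter.Eventually.of_forall fun t ht => ?_)
    have hcn : 0 ≤ Real.cos t :=
      Real.cos_nonneg_of_mem_Icc ⟨by linarith [ht.1], ht.2⟩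
    have h2 : ‖g t‖ ≤ C := hC t ⟨ht.1.le, ht.2⟩
    have hs : 0 ≤ Real.pi/2 - t := by linarith [ht.2]
    have hlow : 2/Real.pi * (Real.pi/2 - t) ≤ Real.cos t := by
      have := Real.mul_le_sin (x := Real.pi/2 - t) hs (by linarith [ht.1])
      rwa [Real.sin_pi_div_two_sub] at this
    have hbase : 0 ≤ 2/Real.pi * (Real.pi/2 - t) := by positivity
    have key : Real.cos t ^ p ≤ (2/Real.pi * (Real.pi/2 - t)) ^ p := by
      rcases eq_or_lt_of_le hs with h | h
      · have ht2 : t = Real.pi/2 := by linarith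
        rw [ht2]
        simp [Real.cos_pi_div_two, Real.zero_rpow hp0.ne]
      · exact Real.rpow_le_rpow_of_nonpos (by positivity) hlow hp0.le
    have h3 : 0 ≤ Real.cos t ^ p := Real.rpow_nonneg hcn p
    have hrw : (2/Real.pi * (Real.pi/2 - t)) ^ p = (2/Real.pi)^p * (Real.pi/2 - t)^p :=
      Real.mul_rpow (by positivity) hs
    show ‖Real.cos t ^ p * g t‖ ≤ ‖(2/Real.pi)^p * C * (Real.pi/2 - t)^p‖
    calc ‖Real.cos t ^ p * g t‖ = Real.cos t ^ p * ‖g t‖ := by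
          rw [norm_mul, Real.norm_of_nonneg h3]
      _ ≤ (2/Real.pi * (Real.pi/2 - t)) ^ p * C :=
          mul_le_mul key h2 (norm_nonneg _) (Real.rpow_nonneg hbase p)
      _ = (2/Real.pi)^p * C * (Real.pi/2 - t)^p := by rw [hrw]; ring
      _ ≤ ‖(2/Real.pi)^p * C * (Real.pi/2 - t)^p‖ := le_abs_self _

lemma cosRpowIntegrable {p : ℝ} (hp : -1 < p) (g : ℝ → ℝ) (hg : Continuous g) :
    IntervalIntegrable (fun t => Real.cos t ^ p * g t) volume (-(Real.pi/2)) (Real.pi/2) := by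
  have h1 := cosRpowIntegrableHalf hp g hg
  have h2 := cosRpowIntegrableHalf hp (fun t => g (-t)) (hg.comp continuous_neg)
  have h3 : IntervalIntegrable (fun t => Real.cos t ^ p * g t) volume (-(Real.pi/2)) 0 := by
    have h := (IntervalIntegrable.iff_comp_neg).mp h2
    simp only [Real.cos_neg, neg_neg, neg_zero] at h
    exact h.symm
  exact h3.trans h1

theorem beta_identity (x y : ℝ) (hx : 0 < x) :
    beta (x + 2) y = (x * (x + 1) / ((x + 1) ^ 2 + y ^ 2)) * beta x y := by
  have hpi := Real.pi_pos
  set a := -(Real.pi/2) with ha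
  set b := Real.pi/2 with hb
  have hab : a ≤ b := by rw [ha, hb]; linarith
  have hE : Continuous fun t : ℝ => Real.exp (y * t) :=
    Real.continuous_exp.comp (continuous_const.mul continuous_id)
  have hint0 : IntervalIntegrable (fun t => Real.cos t ^ (x-1) * Real.exp (y*t)) volume a b :=
    cosRpowIntegrable (by linarith) _ hE
  have hint2 : IntervalIntegrable (fun t => Real.cos t ^ (x+1) * Real.exp (y*t)) volume a b :=
    cosRpowIntegrable (by linarith) _ hE
  have hints : IntervalIntegrable (fun t => Real.cos t ^ x * (Real.sin t * Real.exp (y*t)))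
      volume a b := cosRpowIntegrable (by linarith) _ (Real.continuous_sin.mul hE)
  set B0 := ∫ t in a..b, Real.cos t ^ (x-1) * Real.exp (y*t) with hB0
  set B2 := ∫ t in a..b, Real.cos t ^ (x+1) * Real.exp (y*t) with hB2
  set I1 := ∫ t in a..b, Real.cos t ^ x * (Real.sin t * Real.exp (y*t)) with hI1
  have dexp : ∀ t : ℝ, HasDerivAt (fun t => Real.exp (y*t)) (y * Real.exp (y*t)) t := by
    intro t
    simpa [mul_comm, Function.comp_def] using (Real.hasDerivAt_exp (y*t)).comp t ((hasDerivAt_id t).const_mul y)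
  -- first identity : y * B2 = (x+1) * I1
  have eq1 : y * B2 - (x+1) * I1 = 0 := by
    have hcont : ContinuousOn (fun t => Real.cos t ^ (x+1) * Real.exp (y*t)) (Set.Icc a b) :=
      (Real.continuous_cos.continuousOn.rpow_const fun t _ => Or.inr (by linarith)).mul
        hE.continuousOn
    have hderiv : ∀ t ∈ Set.Ioo a b, HasDerivAt (fun t => Real.cos t ^ (x+1) * Real.exp (y*t))
        (y * (Real.cos t ^ (x+1) * Real.exp (y*t))
          - (x+1) * (Real.cos t ^ x * (Real.sin t * Real.exp (y*t)))) t := by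
      intro t ht
      have hc : 0 < Real.cos t := Real.cos_pos_of_mem_Ioo ht
      have d1 := ((Real.hasDerivAt_cos t).rpow_const (p := x+1) (Or.inl hc.ne')).mul (dexp t)
      convert d1 using 1
      rfl; rfl; rfl
      have e1 : x + 1 - 1 = x := by ring
      rw [e1]; ring
    have hFTC := intervalIntegral.integral_eq_sub_of_hasDeriv_right_of_le hab hcont
      (fun t ht => (hderiv t ht).hasDerivWithinAt)
      ((hint2.const_mul y).sub (hints.const_mul (x+1)))
    rw [intervalIntegral.integral_sub (hint2.const_mul y) (hints.const_mul (x+1)),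
      intervalIntegral.integral_const_mul, intervalIntegral.integral_const_mul] at hFTC
    rw [hFTC, ha, hb]
    simp [Real.cos_pi_div_two, Real.zero_rpow (by linarith : x + 1 ≠ 0)]
  -- second identity : (x+1) * B2 - x * B0 + y * I1 = 0
  have eq2 : (x+1) * B2 - x * B0 + y * I1 = 0 := by
    have hcont : ContinuousOn (fun t => Real.cos t ^ x * (Real.sin t * Real.exp (y*t)))
        (Set.Icc a b) :=
      (Real.continuous_cos.continuousOn.rpow_const fun t _ => Or.inr (by linarith)).mul
        (Real.continuous_sin.mul hE).continuousOn
    have hderiv : ∀ t ∈ Set.Ioo a b,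
        HasDerivAt (fun t => Real.cos t ^ x * (Real.sin t * Real.exp (y*t)))
        ((x+1) * (Real.cos t ^ (x+1) * Real.exp (y*t))
          - x * (Real.cos t ^ (x-1) * Real.exp (y*t))
          + y * (Real.cos t ^ x * (Real.sin t * Real.exp (y*t)))) t := by
      intro t ht
      have hc : 0 < Real.cos t := Real.cos_pos_of_mem_Ioo ht
      have d1 := ((Real.hasDerivAt_cos t).rpow_const (p := x) (Or.inl hc.ne')).mul
        ((Real.hasDerivAt_sin t).mul (dexp t))
      convert d1 using 1
      rfl; rfl; rfl
      have hx1 : Real.cos t ^ x = Real.cos t ^ (x-1) * Real.cos t := by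
        rw [← Real.rpow_add_one hc.ne' (x-1), sub_add_cancel]
      have hx2 : Real.cos t ^ (x+1) = Real.cos t ^ x * Real.cos t :=
        Real.rpow_add_one hc.ne' x
      rw [hx2, hx1, Pi.mul_apply]
      linear_combination (x * Real.cos t ^ (x-1) * Real.exp (y*t)) * (Real.sin_sq_add_cos_sq t)
    have hFTC := intervalIntegral.integral_eq_sub_of_hasDeriv_right_of_le hab hcont
      (fun t ht => (hderiv t ht).hasDerivWithinAt)
      (((hint2.const_mul (x+1)).sub (hint0.const_mul x)).add (hints.const_mul y))
    rw [intervalIntegral.integral_add ((hint2.const_mul (x+1)).sub (hint0.const_mul x))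
        (hints.const_mul y),
      intervalIntegral.integral_sub (hint2.const_mul (x+1)) (hint0.const_mul x),
      intervalIntegral.integral_const_mul, intervalIntegral.integral_const_mul,
      intervalIntegral.integral_const_mul] at hFTC
    rw [hFTC, ha, hb]
    simp [Real.cos_pi_div_two, Real.zero_rpow hx.ne']
  have hbeta2 : beta (x+2) y = B2 := by
    rw [hB2]
    simp only [beta, show x + 2 - 1 = x + 1 from by ring]; rfl
  have hbeta0 : beta x y = B0 := by rw [hB0]; simp only [beta]; rfl
  have hD : (0:ℝ) < (x+1)^2 + y^2 := by positivity
  have final : ((x+1)^2 + y^2) * B2 = x * (x+1) * B0 := by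
    linear_combination (x+1) * eq2 + y * eq1
  rw [hbeta2, hbeta0, div_mul_eq_mul_div, eq_div_iff hD.ne']
  linear_combination final
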